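/- Let A be a commutative Q-algebra and consider a regular singular connection ∇ = d + Γ_{-1} t^{-1} dt + (lower order terms) on A((t))^⊕n, where Γ_{-1} ∈ Mat_n(A). Suppose that N·Id + Γ_{-1} is invertible for all but finitely many integers N. Then: (a) for s ≫ 0 the map ∇: t^s A[[t]]^⊕n → t^{s-1} A[[t]]^⊕n dt is an isomorphism; (b) for r ≫ 0 the induced map A((t))^⊕n / t^{-r}A[[t]]^⊕n → A((t))^⊕n dt / t^{-r-1}A[[t]]^⊕n dt is an isomorphism. In particular the connection is Fredholm (its de Rham complex is a perfect complex of A-modules). -/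

import Mathlib

open HahnSeries

/-- The formal derivative `d/dt` on Laurent series, as an `A`-linear map. -/
noncomputable def lderiv (A : Type*) [CommRing A] : LaurentSeries A →ₗ[A] LaurentSeries A where
  toFun f :=
    { coeff := fun n => (n + 1 : ℤ) • f.coeff (n + 1)
      isPWO_support' := by
        have hsub : (Function.support fun n : ℤ => (n + 1 : ℤ) • f.coeff (n + 1)) ⊆
            (fun m : ℤ => m - 1) '' f.support := by
          intro n hn
          refine ⟨n + 1, fun h0 => ?_, by ring⟩
          apply hn
          simp [h0]
        exact ((f.isPWO_support.image_of_monotoneOn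
          (fun a _ b _ hab => sub_le_sub_right hab 1)).mono hsub) }
  map_add' f g := by
    ext n
    simp [smul_add]
  map_smul' a f := by
    ext n
    simp only [HahnSeries.coeff_smul, RingHom.id_apply, zsmul_eq_mul, smul_eq_mul]
    push_cast
    ring

/-- The connection `∇ = d + Γ dt` (with `dt` suppressed) on `A((t))^{⊕ n}`,
as an `A`-linear endomorphism. -/
noncomputable def nablaLin {A : Type*} [CommRing A] {n : ℕ}
    (Γ : Matrix (Fin n) (Fin n) (LaurentSeries A)) :
    (Fin n → LaurentSeries A) →ₗ[A] (Fin n → LaurentSeries A) where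
  toFun v := fun i => lderiv A (v i) + ∑ j, Γ i j * v j
  map_add' u v := by
    funext i
    simp only [Pi.add_apply, map_add, mul_add, Finset.sum_add_distrib]
    abel
  map_smul' a v := by
    funext i
    simp only [Pi.smul_apply, map_smul, RingHom.id_apply, smul_add, Finset.smul_sum]
    congr 1
    refine Finset.sum_congr rfl fun j _ => ?_
    rw [← HahnSeries.single_zero_mul_eq_smul, ← HahnSeries.single_zero_mul_eq_smul,
      mul_left_comm]

/-- `t^{s} A[[t]]^{⊕ n}` inside `A((t))^{⊕ n}`, as an `A`-submodule. -/
def latticeSub (A : Type*) [CommRing A] (n : ℕ) (s : ℤ) :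
    Submodule A (Fin n → LaurentSeries A) where
  carrier := {v | ∀ i, ∀ m : ℤ, m < s → (v i).coeff m = 0}
  add_mem' := by
    intro u v hu hv i m hm
    simp [hu i m hm, hv i m hm]
  zero_mem' := by intro i m hm; simp
  smul_mem' := by
    intro a v hv i m hm
    simp [hv i m hm]

section Aux
open HahnSeries Finset
variable {A : Type*} [CommRing A] {n : ℕ}

/-- The matrix `N·Id + Γ₋₁`. -/
noncomputable def Mmat (Γ : Matrix (Fin n) (Fin n) (LaurentSeries A)) (N : ℤ) :
    Matrix (Fin n) (Fin n) A :=
  (N : A) • (1 : Matrix (Fin n) (Fin n) A) + Matrix.of fun i j => (Γ i j).coeff (-1)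

lemma coeff_sum (m : ℤ) (f : Fin n → LaurentSeries A) :
    (∑ j, f j).coeff m = ∑ j, (f j).coeff m :=
  map_sum (HahnSeries.coeff.addMonoidHom m) f Finset.univ

lemma mul_coeff_Icc {Γ : Matrix (Fin n) (Fin n) (LaurentSeries A)}
    (hpole : ∀ i j, ∀ m : ℤ, m < -1 → (Γ i j).coeff m = 0)
    (i j : Fin n) {v : LaurentSeries A} {s : ℤ} (hv : ∀ b : ℤ, b < s → v.coeff b = 0)
    (m : ℤ) :
    (Γ i j * v).coeff m = ∑ b ∈ Finset.Icc s (m + 1), (Γ i j).coeff (m - b) * v.coeff b := by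
  classical
  set S := Finset.antidiagonal (Γ i j).isPWO_support v.isPWO_support m with hS
  have hinj : ∀ p ∈ S, ∀ q ∈ S, p.2 = q.2 → p = q := by
    intro p hp q hq hpq
    rw [hS, Finset.mem_addAntidiagonal] at hp hq
    ext
    · omega
    · exact hpq
  calc (Γ i j * v).coeff m
      = ∑ p ∈ S, (Γ i j).coeff p.1 * v.coeff p.2 := HahnSeries.coeff_mul
    _ = ∑ p ∈ S, (Γ i j).coeff (m - p.2) * v.coeff p.2 := by
        refine Finset.sum_congr rfl fun p hp => ?_
        rw [hS, Finset.mem_addAntidiagonal] at hp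
        rw [show m - p.2 = p.1 by omega]
    _ = ∑ b ∈ S.image Prod.snd, (Γ i j).coeff (m - b) * v.coeff b :=
        (Finset.sum_image (f := fun b => (Γ i j).coeff (m - b) * v.coeff b) (g := Prod.snd) hinj).symm
    _ = ∑ b ∈ Finset.Icc s (m + 1), (Γ i j).coeff (m - b) * v.coeff b := by
        apply Finset.sum_subset
        · intro b hb
          simp only [Finset.mem_image] at hb
          obtain ⟨p, hp, rfl⟩ := hb
          rw [hS, Finset.mem_addAntidiagonal] at hp
          obtain ⟨h1, h2, h3⟩ := hp
          rw [Finset.mem_Icc]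
          constructor
          · by_contra hlt
            exact h2 (hv _ (by omega))
          · by_contra hlt
            exact h1 (hpole i j p.1 (by omega))
        · intro b hb hnb
          by_contra hne
          apply hnb
          have hΓ : (Γ i j).coeff (m - b) ≠ 0 := fun h => hne (by rw [h, zero_mul])
          have hvb : v.coeff b ≠ 0 := fun h => hne (by rw [h, mul_zero])
          refine Finset.mem_image.mpr ⟨(m - b, b), ?_, rfl⟩
          rw [hS, Finset.mem_addAntidiagonal]
          exact ⟨hΓ, hvb, by omega⟩

lemma nabla_coeff_lt {Γ : Matrix (Fin n) (Fin n) (LaurentSeries A)}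
    (hpole : ∀ i j, ∀ m : ℤ, m < -1 → (Γ i j).coeff m = 0)
    {v : Fin n → LaurentSeries A} {s : ℤ} (hv : v ∈ latticeSub A n s)
    (i : Fin n) (m : ℤ) (hm : m < s - 1) :
    (nablaLin Γ v i).coeff m = 0 := by
  show (lderiv A (v i) + ∑ j, Γ i j * v j).coeff m = 0
  rw [HahnSeries.coeff_add, _root_.coeff_sum]
  have h1 : (lderiv A (v i)).coeff m = (m + 1 : ℤ) • (v i).coeff (m + 1) := rfl
  rw [h1, hv i (m + 1) (by omega), smul_zero, zero_add]
  apply Finset.sum_eq_zero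
  intro j _
  rw [mul_coeff_Icc hpole i j (fun b hb => hv j b hb) m]
  rw [Finset.Icc_eq_empty (by omega), Finset.sum_empty]

lemma nabla_coeff_eq {Γ : Matrix (Fin n) (Fin n) (LaurentSeries A)}
    (hpole : ∀ i j, ∀ m : ℤ, m < -1 → (Γ i j).coeff m = 0)
    {v : Fin n → LaurentSeries A} {s : ℤ} (hv : v ∈ latticeSub A n s)
    (i : Fin n) (m : ℤ) (hm : s - 1 ≤ m) :
    (nablaLin Γ v i).coeff m =
      (Mmat Γ (m + 1)).mulVec (fun j => (v j).coeff (m + 1)) i +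
      ∑ j, ∑ b ∈ Finset.Icc s m, (Γ i j).coeff (m - b) * (v j).coeff b := by
  show (lderiv A (v i) + ∑ j, Γ i j * v j).coeff m = _
  rw [HahnSeries.coeff_add, _root_.coeff_sum]
  have h1 : (lderiv A (v i)).coeff m = (m + 1 : ℤ) • (v i).coeff (m + 1) := rfl
  have h2 : ∀ j, (Γ i j * v j).coeff m =
      (Γ i j).coeff (-1) * (v j).coeff (m + 1)
        + ∑ b ∈ Finset.Icc s m, (Γ i j).coeff (m - b) * (v j).coeff b := by
    intro j
    rw [mul_coeff_Icc hpole i j (fun b hb => hv j b hb) m]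
    rw [show Finset.Icc s (m + 1) = insert (m + 1) (Finset.Icc s m) by
      ext x; simp only [Finset.mem_Icc, Finset.mem_insert]; omega]
    rw [Finset.sum_insert (by simp)]
    rw [show m - (m + 1) = -1 by omega]
  rw [h1, Finset.sum_congr rfl fun j _ => h2 j, Finset.sum_add_distrib]
  have h3 : (Mmat Γ (m + 1)).mulVec (fun j => (v j).coeff (m + 1)) i =
      (m + 1 : ℤ) • (v i).coeff (m + 1) + ∑ j, (Γ i j).coeff (-1) * (v j).coeff (m + 1) := by
    simp only [Mmat, Matrix.mulVec, dotProduct, Matrix.add_apply, Matrix.smul_apply,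
      Matrix.one_apply, Matrix.of_apply, smul_eq_mul, mul_ite, mul_one, mul_zero, add_mul,
      Finset.sum_add_distrib, zsmul_eq_mul]
    congr 1
    rw [Finset.sum_eq_single i (fun b _ hb => by simp [Ne.symm hb]) (by simp)]
    push_cast
    simp
  rw [h3]
  ring

end Aux

section Sol
open HahnSeries Finset
variable {A : Type*} [CommRing A] {n : ℕ}

/-- Recursively solve for the coefficients of a preimage of `w` under `∇`. -/
noncomputable def sol (Γ : Matrix (Fin n) (Fin n) (LaurentSeries A))
    (w : Fin n → LaurentSeries A) (s : ℤ) (top : WithTop ℤ) (m : ℤ) : Fin n → A :=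
  if h : s ≤ m ∧ (m : WithTop ℤ) ≤ top then
    (Mmat Γ m)⁻¹.mulVec fun j =>
      (w j).coeff (m - 1) -
        ∑ b ∈ (Finset.Icc s (m - 1)).attach,
          ∑ j', (Γ j j').coeff (m - 1 - b.1) * sol Γ w s top b.1 j'
  else 0
termination_by (m - s).toNat
decreasing_by
  · have hb := b.2
    rw [Finset.mem_Icc] at hb
    omega

lemma sol_eq_zero (Γ : Matrix (Fin n) (Fin n) (LaurentSeries A))
    (w : Fin n → LaurentSeries A) (s : ℤ) (top : WithTop ℤ) (m : ℤ)
    (hm : ¬ (s ≤ m ∧ (m : WithTop ℤ) ≤ top)) : sol Γ w s top m = 0 := by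
  rw [sol, dif_neg hm]

lemma sol_eq (Γ : Matrix (Fin n) (Fin n) (LaurentSeries A))
    (w : Fin n → LaurentSeries A) (s : ℤ) (top : WithTop ℤ) (m : ℤ)
    (hm : s ≤ m ∧ (m : WithTop ℤ) ≤ top) :
    sol Γ w s top m = (Mmat Γ m)⁻¹.mulVec fun j =>
      (w j).coeff (m - 1) -
        ∑ b ∈ Finset.Icc s (m - 1), ∑ j', (Γ j j').coeff (m - 1 - b) * sol Γ w s top b j' := by
  rw [sol, dif_pos hm]
  have hfe : (fun j => (w j).coeff (m - 1) -
        ∑ b ∈ (Finset.Icc s (m - 1)).attach,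
          ∑ j', (Γ j j').coeff (m - 1 - b.1) * sol Γ w s top b.1 j')
      = (fun j => (w j).coeff (m - 1) -
        ∑ b ∈ Finset.Icc s (m - 1),
          ∑ j', (Γ j j').coeff (m - 1 - b) * sol Γ w s top b j') := by
    funext j
    rw [Finset.sum_attach (Finset.Icc s (m - 1))
      (fun b => ∑ j', (Γ j j').coeff (m - 1 - b) * sol Γ w s top b j')]
  rw [hfe]

/-- The solution as a vector of Laurent series. -/
noncomputable def solV (Γ : Matrix (Fin n) (Fin n) (LaurentSeries A))
    (w : Fin n → LaurentSeries A) (s : ℤ) (top : WithTop ℤ) : Fin n → LaurentSeries A :=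
  fun j =>
    { coeff := fun m => sol Γ w s top m j
      isPWO_support' := by
        have hsub : (Function.support fun m => sol Γ w s top m j) ⊆ Set.Ici s := by
          intro m hm
          by_contra hms
          rw [Set.mem_Ici, not_le] at hms
          apply hm
          show sol Γ w s top m j = 0
          rw [sol_eq_zero Γ w s top m (by intro h; omega)]
          rfl
        exact (Set.isPWO_iff_isWF.mpr
          ((bddBelow_Ici (a := s)).wellFoundedOn_lt)).mono hsub }

lemma solV_mem (Γ : Matrix (Fin n) (Fin n) (LaurentSeries A))
    (w : Fin n → LaurentSeries A) (s : ℤ) (top : WithTop ℤ) :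
    solV Γ w s top ∈ latticeSub A n s := by
  intro i m hm
  show sol Γ w s top m i = 0
  rw [sol_eq_zero Γ w s top m (by intro h; omega)]
  rfl

lemma nabla_solV {Γ : Matrix (Fin n) (Fin n) (LaurentSeries A)}
    (hpole : ∀ i j, ∀ m : ℤ, m < -1 → (Γ i j).coeff m = 0)
    {w : Fin n → LaurentSeries A} {s : ℤ} {top : WithTop ℤ}
    (hU : ∀ N : ℤ, s ≤ N → (N : WithTop ℤ) ≤ top → IsUnit (Mmat Γ N))
    (i : Fin n) (m : ℤ) (hm : s - 1 ≤ m) (htop : ((m + 1 : ℤ) : WithTop ℤ) ≤ top) :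
    (nablaLin Γ (solV Γ w s top) i).coeff m = (w i).coeff m := by
  rw [nabla_coeff_eq hpole (solV_mem Γ w s top) i m hm]
  have hcond : s ≤ m + 1 ∧ ((m + 1 : ℤ) : WithTop ℤ) ≤ top := ⟨by omega, htop⟩
  have hc : (fun j => (solV Γ w s top j).coeff (m + 1)) = sol Γ w s top (m + 1) := rfl
  rw [hc, sol_eq Γ w s top (m + 1) hcond]
  rw [Matrix.mulVec_mulVec, Matrix.mul_nonsing_inv _
    ((Matrix.isUnit_iff_isUnit_det _).mp (hU (m + 1) (by omega) htop)), Matrix.one_mulVec]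
  have harg : ∀ j, (w j).coeff (m + 1 - 1) -
      ∑ b ∈ Finset.Icc s (m + 1 - 1), ∑ j', (Γ j j').coeff (m + 1 - 1 - b) * sol Γ w s top b j'
      = (w j).coeff m -
      ∑ b ∈ Finset.Icc s m, ∑ j', (Γ j j').coeff (m - b) * (solV Γ w s top j').coeff b := by
    intro j
    rw [show m + 1 - 1 = m by omega]
    rfl
  rw [harg i, Finset.sum_comm]
  ring

end Sol

section Inj
open HahnSeries Finset
variable {A : Type*} [CommRing A] {n : ℕ}

lemma nabla_inj {Γ : Matrix (Fin n) (Fin n) (LaurentSeries A)}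
    (hpole : ∀ i j, ∀ m : ℤ, m < -1 → (Γ i j).coeff m = 0)
    {v : Fin n → LaurentSeries A} {s m₀ : ℤ} (hv : v ∈ latticeSub A n s)
    (hU : ∀ N : ℤ, s ≤ N → N ≤ m₀ → IsUnit (Mmat Γ N))
    (hnab : ∀ i, ∀ m : ℤ, m < m₀ → (nablaLin Γ v i).coeff m = 0) :
    ∀ i, ∀ m : ℤ, m ≤ m₀ → (v i).coeff m = 0 := by
  have key : ∀ d : ℕ, ∀ i, ∀ m : ℤ, m ≤ m₀ → m < s + d → (v i).coeff m = 0 := by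
    intro d
    induction d with
    | zero => intro i m _ hlt; exact hv i m (by omega)
    | succ d ih =>
      intro i m hm hlt
      by_cases hcase : m < s + d
      · exact ih i m hm hcase
      · have hms : m = s + d := by omega
        have hsm : s ≤ m := by omega
        have hvec : (Mmat Γ m).mulVec (fun j => (v j).coeff m) = 0 := by
          funext i'
          have hform := nabla_coeff_eq hpole hv i' (m - 1) (by omega)
          rw [hnab i' (m - 1) (by omega)] at hform
          have hR : ∀ j, ∀ b ∈ Finset.Icc s (m - 1),
              (Γ i' j).coeff (m - 1 - b) * (v j).coeff b = 0 := by
            intro j b hb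
            rw [Finset.mem_Icc] at hb
            rw [ih j b (by omega) (by omega), mul_zero]
          rw [Finset.sum_congr rfl (fun j _ => Finset.sum_eq_zero (hR j)),
            Finset.sum_const_zero, add_zero, show m - 1 + 1 = m from by omega] at hform
          exact hform.symm
        have hu := (Matrix.isUnit_iff_isUnit_det _).mp (hU m hsm (by omega))
        have hzero : (fun j => (v j).coeff m) = 0 := by
          have h1 : (Mmat Γ m)⁻¹.mulVec ((Mmat Γ m).mulVec fun j => (v j).coeff m)
              = (fun j => (v j).coeff m) := by
            rw [Matrix.mulVec_mulVec, Matrix.nonsing_inv_mul _ hu, Matrix.one_mulVec]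
          rw [hvec, Matrix.mulVec_zero] at h1
          exact h1.symm
        exact congrFun hzero i
  intro i m hm
  have hd : m < s + ((m - s).toNat + 1 : ℕ) := by
    have := Int.self_le_toNat (m - s)
    omega
  exact key ((m - s).toNat + 1) i m hm hd

end Inj

/-- **Example \ref{e:rs-evalues}** (regular singular connections with non-resonant eigenvalues
are Fredholm).  Let `A` be a commutative `ℚ`-algebra and
`∇ = d + Γ₋₁ t^{-1} dt + (lower order terms)` a regular singular connection on `A((t))^{⊕ n}`
such that `N·Id + Γ₋₁` is invertible for all but finitely many integers `N`.  Then: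
(a) for `s ≫ 0` the map `∇ : t^s A[[t]]^{⊕n} → t^{s-1} A[[t]]^{⊕n} dt` is an isomorphism, and
(b) for `r ≫ 0` the induced map
`A((t))^{⊕n}/t^{-r} A[[t]]^{⊕n} → A((t))^{⊕n} dt / t^{-r-1} A[[t]]^{⊕n} dt` is an isomorphism
(so the connection is Fredholm). -/
theorem stmt_4 {A : Type*} [CommRing A] [Algebra ℚ A] {n : ℕ}
    (Γ : Matrix (Fin n) (Fin n) (LaurentSeries A))
    (hpole : ∀ i j, ∀ m : ℤ, m < -1 → (Γ i j).coeff m = 0)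
    (hinv : {N : ℤ | ¬ IsUnit ((N : A) • (1 : Matrix (Fin n) (Fin n) A) +
      Matrix.of fun i j => (Γ i j).coeff (-1))}.Finite) :
    (∃ s₀ : ℤ, ∀ s ≥ s₀,
        Set.BijOn (nablaLin Γ) (latticeSub A n s) (latticeSub A n (s - 1))) ∧
    (∃ r₀ : ℤ, ∀ r ≥ r₀,
        ∃ h : latticeSub A n (-r) ≤ (latticeSub A n (-r - 1)).comap (nablaLin Γ),
          Function.Bijective
            (Submodule.mapQ (latticeSub A n (-r)) (latticeSub A n (-r - 1)) (nablaLin Γ) h)) := by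
  classical
  obtain ⟨u, hu⟩ := hinv.bddAbove
  obtain ⟨l, hl⟩ := hinv.bddBelow
  have hUa : ∀ N : ℤ, u + 1 ≤ N → IsUnit (Mmat Γ N) := by
    intro N hN
    by_contra hc
    have := hu (show N ∈ _ from hc)
    omega
  have hUb : ∀ N : ℤ, N ≤ l - 1 → IsUnit (Mmat Γ N) := by
    intro N hN
    by_contra hc
    have := hl (show N ∈ _ from hc)
    omega
  constructor
  · -- part (a)
    refine ⟨u + 1, fun s hs => ⟨?_, ?_, ?_⟩⟩
    · -- MapsTo
      intro v hv i m hm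
      exact nabla_coeff_lt hpole hv i m hm
    · -- InjOn
      intro v hv v' hv' heq
      have hd : v - v' ∈ latticeSub A n s := sub_mem hv hv'
      have hn0 : nablaLin Γ (v - v') = 0 := by rw [map_sub, heq, sub_self]
      have hz : ∀ i, ∀ m : ℤ, ((v - v') i).coeff m = 0 := by
        intro i m
        exact nabla_inj hpole hd (fun N hN _ => hUa N (by omega))
          (fun i' m' _ => by rw [hn0]; rfl) i m le_rfl
      funext i
      ext m
      have := hz i m
      rw [Pi.sub_apply, HahnSeries.coeff_sub] at this
      exact sub_eq_zero.mp this
    · -- SurjOn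
      intro w hw
      refine ⟨solV Γ w s ⊤, solV_mem Γ w s ⊤, ?_⟩
      funext i
      ext m
      by_cases hc : m < s - 1
      · rw [nabla_coeff_lt hpole (solV_mem Γ w s ⊤) i m hc, hw i m hc]
      · exact nabla_solV hpole (fun N hN _ => hUa N (by omega)) i m (by omega) le_top
  · -- part (b)
    refine ⟨-l + 1, fun r hr => ?_⟩
    have hUr : ∀ N : ℤ, N ≤ -r - 1 → IsUnit (Mmat Γ N) := fun N hN => hUb N (by omega)
    have hle : latticeSub A n (-r) ≤ (latticeSub A n (-r - 1)).comap (nablaLin Γ) := by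
      intro v hv i m hm
      exact nabla_coeff_lt hpole hv i m (by omega)
    refine ⟨hle, ?_, ?_⟩
    · -- injective
      intro x y hxy
      obtain ⟨a, rfl⟩ := Submodule.Quotient.mk_surjective _ x
      obtain ⟨b, rfl⟩ := Submodule.Quotient.mk_surjective _ y
      rw [Submodule.mapQ_apply, Submodule.mapQ_apply, Submodule.Quotient.eq, ← map_sub] at hxy
      rw [Submodule.Quotient.eq]
      set T : Finset ℤ :=
        insert (-r) (Finset.image (fun i => ((a - b) i).order) Finset.univ) with hT
      have hTne : T.Nonempty := ⟨-r, Finset.mem_insert_self _ _⟩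
      set s₁ := T.min' hTne with hs₁
      have hmem : a - b ∈ latticeSub A n s₁ := by
        intro i m hm
        apply HahnSeries.coeff_eq_zero_of_lt_order
        have : s₁ ≤ ((a - b) i).order :=
          Finset.min'_le T _ (Finset.mem_insert_of_mem
            (Finset.mem_image_of_mem _ (Finset.mem_univ i)))
        omega
      intro i m hm
      exact nabla_inj hpole hmem (fun N _ h2 => hUr N h2)
        (fun i' m' hm' => hxy i' m' hm') i m (by omega)
    · -- surjective
      intro y
      obtain ⟨w, rfl⟩ := Submodule.Quotient.mk_surjective _ y
      set T : Finset ℤ :=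
        insert 0 (Finset.image (fun i => (w i).order) Finset.univ) with hT
      have hTne : T.Nonempty := ⟨0, Finset.mem_insert_self _ _⟩
      set s₁ := T.min' hTne with hs₁
      have hwmem : ∀ i, ∀ m : ℤ, m < s₁ + 1 - 1 → (w i).coeff m = 0 := by
        intro i m hm
        apply HahnSeries.coeff_eq_zero_of_lt_order
        have : s₁ ≤ (w i).order :=
          Finset.min'_le T _ (Finset.mem_insert_of_mem
            (Finset.mem_image_of_mem _ (Finset.mem_univ i)))
        omega
      set top : WithTop ℤ := ((-r - 1 : ℤ) : WithTop ℤ) with htop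
      have hU' : ∀ N : ℤ, s₁ + 1 ≤ N → (N : WithTop ℤ) ≤ top → IsUnit (Mmat Γ N) :=
        fun N _ h2 => hUr N (WithTop.coe_le_coe.mp h2)
      refine ⟨Submodule.Quotient.mk (solV Γ w (s₁ + 1) top), ?_⟩
      rw [Submodule.mapQ_apply, Submodule.Quotient.eq]
      intro i m hm
      rw [Pi.sub_apply, HahnSeries.coeff_sub, sub_eq_zero]
      by_cases hc : m < s₁ + 1 - 1
      · rw [nabla_coeff_lt hpole (solV_mem Γ w (s₁ + 1) top) i m hc, hwmem i m hc]
      · exact nabla_solV hpole hU' i m (by omega) (WithTop.coe_le_coe.mpr (by omega))
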